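/- For all nonnegative integers l, m, n: \mathscr{B}_m^{(-l)}(n) = \sum_{j=0}^{\min(l,m)} n! (j!)^2 \binom{j+n}{n} {l+1 choose_2 j+1} {m+1 choose_2 j+1}, where \mathscr{B}_m^{(-l)}(n) = \sum_{j=0}^{n} [n choose_1 j] B_m^{(-l-j)}(n). -/

import Mathlib

open PowerSeries Finset

/-- Unsigned Stirling numbers of the first kind. -/
def stirling1 : ℕ → ℕ → ℕ
  | 0, 0 => 1
  | 0, _ + 1 => 0
  | _ + 1, 0 => 0
  | n + 1, m + 1 => stirling1 n m + n * stirling1 n (m + 1)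

/-- Stirling numbers of the second kind. -/
def stirling2 : ℕ → ℕ → ℕ
  | 0, 0 => 1
  | 0, _ + 1 => 0
  | _ + 1, 0 => 0
  | n + 1, m + 1 => stirling2 n m + (m + 1) * stirling2 n (m + 1)

/-- e^t as a formal power series over ℚ. -/
noncomputable def expQ : PowerSeries ℚ := PowerSeries.exp ℚ

/-- e^{-t} as a formal power series over ℚ. -/
noncomputable def expNegQ : PowerSeries ℚ := rescale (-1) expQ

/-- The formal power series Li_k(1-e^{-t})/(1-e^{-t}) = ∑_{m≥0} (m+1)^{-k} (1-e^{-t})^m,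
  defined coefficientwise (the tail vanishes since (1-e^{-t})^m has order m). -/
noncomputable def liEGF (k : ℤ) : PowerSeries ℚ :=
  PowerSeries.mk fun j =>
    ∑ m ∈ range (j + 1), ((m : ℚ) + 1) ^ (-k) * coeff j ((1 - expNegQ) ^ m)

/-- EGF of the poly-Bernoulli polynomials: e^{-xt} Li_k(1-e^{-t})/(1-e^{-t}). -/
noncomputable def pbEGF (k : ℤ) (x : ℚ) : PowerSeries ℚ := rescale (-x) expQ * liEGF k

/-- Poly-Bernoulli polynomial value B_m^{(k)}(x). -/
noncomputable def pbPoly (k : ℤ) (x : ℚ) (m : ℕ) : ℚ := m.factorial * coeff m (pbEGF k x)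

/-- Poly-Bernoulli number B_m^{(k)}. -/
noncomputable def pbB (k : ℤ) (m : ℕ) : ℚ := pbPoly k 0 m

/-- Poly-Bernoulli number C_m^{(k)}. -/
noncomputable def pbC (k : ℤ) (m : ℕ) : ℚ := pbPoly k 1 m

/-- 𝓑_m^{(-l)}(n) = ∑_{j=0}^n [n j] B_m^{(-l-j)}(n). -/
noncomputable def scrB (l m n : ℕ) : ℚ :=
  ∑ j ∈ range (n + 1), (stirling1 n j : ℚ) * pbPoly (-(l : ℤ) - j) n m

lemma stirling2_succ_succ (n m : ℕ) :
    stirling2 (n + 1) (m + 1) = stirling2 n m + (m + 1) * stirling2 n (m + 1) := rfl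
lemma stirling2_zero_right : ∀ n, stirling2 n 0 = if n = 0 then 1 else 0
  | 0 => rfl
  | _ + 1 => rfl
lemma stirling2_eq_zero : ∀ {n m : ℕ}, n < m → stirling2 n m = 0
  | 0, _ + 1, _ => rfl
  | n + 1, m + 1, h => by
    rw [stirling2_succ_succ, stirling2_eq_zero (by omega), stirling2_eq_zero (by omega)]
    simp
lemma stirling1_succ_succ (n m : ℕ) :
    stirling1 (n + 1) (m + 1) = stirling1 n m + n * stirling1 n (m + 1) := rfl
lemma stirling1_eq_zero : ∀ {n m : ℕ}, n < m → stirling1 n m = 0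
  | 0, _ + 1, _ => rfl
  | n + 1, m + 1, h => by
    rw [stirling1_succ_succ, stirling1_eq_zero (by omega), stirling1_eq_zero (by omega)]
    simp
lemma stirling2_one : ∀ n, stirling2 (n + 1) 1 = 1
  | 0 => rfl
  | n + 1 => by
    rw [stirling2_succ_succ, stirling2_zero_right, stirling2_one n]; simp
lemma stirling2_SID : ∀ (j : ℕ) (p : ℕ),
    ∑ a ∈ range (j + 1), j.choose a * stirling2 a p = stirling2 (j + 1) (p + 1)
  | 0, p => by
    cases p <;> simp [stirling2, stirling2_eq_zero]
  | j + 1, p => by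
    have split : ∀ i, (j + 1).choose i = j.choose i + if i = 0 then 0 else j.choose (i - 1) := by
      intro i; cases i with
      | zero => simp
      | succ i => simp [Nat.choose_succ_succ, Nat.add_comm]
    calc ∑ a ∈ range (j + 2), (j + 1).choose a * stirling2 a p
        = ∑ a ∈ range (j + 2), j.choose a * stirling2 a p
          + ∑ a ∈ range (j + 2), (if a = 0 then 0 else j.choose (a - 1)) * stirling2 a p := by
          rw [← Finset.sum_add_distrib]
          exact Finset.sum_congr rfl fun a _ => by rw [split a, Nat.add_mul]
      _ = (∑ a ∈ range (j + 1), j.choose a * stirling2 a p)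
          + ∑ a ∈ range (j + 1), j.choose a * stirling2 (a + 1) p := by
          rw [Finset.sum_range_succ (fun a => j.choose a * stirling2 a p) (j+1),
            Nat.choose_succ_self, Finset.sum_range_succ' (fun a => (if a = 0 then 0 else j.choose (a - 1)) * stirling2 a p) (j+1)]
          simp
      _ = stirling2 (j + 2) (p + 1) := by
          cases p with
          | zero =>
            have h0 : ∀ a, stirling2 (a + 1) 0 = 0 := fun _ => rfl
            simp only [h0, Nat.mul_zero, Finset.sum_const_zero, Nat.add_zero]
            rw [stirling2_SID j 0, stirling2_one, stirling2_one]
          | succ q =>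
            have hthis : ∀ a, stirling2 (a + 1) (q + 1) = stirling2 a q + (q+1) * stirling2 a (q+1) :=
              fun a => rfl
            have hpull : ∑ x ∈ range (j+1), j.choose x * ((q+1) * stirling2 x (q+1))
                = (q+1) * ∑ x ∈ range (j+1), j.choose x * stirling2 x (q+1) := by
              rw [Finset.mul_sum]; exact Finset.sum_congr rfl fun _ _ => by ring
            simp only [hthis, Nat.mul_add, Finset.sum_add_distrib]
            rw [hpull, stirling2_SID j q, stirling2_SID j (q+1)]
            rw [show stirling2 (j + 2) (q + 1 + 1) = stirling2 (j+1) (q+1) + (q+2) * stirling2 (j+1) (q+2) from rfl]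
            ring
lemma stirling2_SIDcor (j p : ℕ) :
    (p + 1) * stirling2 j (p + 1) = ∑ a ∈ range j, j.choose a * stirling2 a p := by
  have h := stirling2_SID j p
  cases j with
  | zero => simp [stirling2_eq_zero]
  | succ j' =>
    rw [Finset.sum_range_succ] at h
    have hrec : stirling2 (j' + 2) (p + 1)
        = stirling2 (j' + 1) p + (p + 1) * stirling2 (j' + 1) (p + 1) := rfl
    simp only [Nat.choose_self, Nat.one_mul] at h
    rw [hrec] at h
    omega
lemma desc_mul (p j : ℕ) :
    (p + 1) * p.descFactorial j = p.descFactorial (j + 1) + (j + 1) * p.descFactorial j := by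
  rcases le_or_gt j p with h | h
  · rw [Nat.descFactorial_succ, ← Nat.add_mul]
    congr 1
    omega
  · rw [Nat.descFactorial_eq_zero_iff_lt.2 h, Nat.descFactorial_eq_zero_iff_lt.2 (by omega)]
    simp
lemma desc_mul_factorial : ∀ (n p : ℕ), (p + n).descFactorial n * p.factorial = (p + n).factorial
  | 0, p => by simp
  | n + 1, p => by
    rw [show p + (n+1) = (p + n) + 1 from rfl, Nat.succ_descFactorial_succ, Nat.factorial_succ,
      Nat.mul_assoc, desc_mul_factorial n p]
lemma risingFact : ∀ (n p : ℕ),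
    ∑ j ∈ range (n + 1), stirling1 n j * (p + 1) ^ j = (p + n).descFactorial n
  | 0, p => by simp [stirling1]
  | n + 1, p => by
    have hs0 : n * stirling1 n 0 = 0 := by
      cases n with
      | zero => rfl
      | succ n' => rw [show stirling1 (n'+1) 0 = 0 from rfl, Nat.mul_zero]
    have hshift : n * ∑ j ∈ range (n + 1), stirling1 n (j+1) * (p + 1) ^ (j+1)
        = n * (p + n).descFactorial n := by
      have e1 : ∑ j ∈ range (n + 2), stirling1 n j * (p + 1) ^ j
          = ∑ j ∈ range (n + 1), stirling1 n (j+1) * (p + 1) ^ (j+1) + stirling1 n 0 := by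
        rw [Finset.sum_range_succ' (fun j => stirling1 n j * (p + 1) ^ j) (n+1)]
        simp
      have e2 : ∑ j ∈ range (n + 2), stirling1 n j * (p + 1) ^ j
          = (p + n).descFactorial n := by
        rw [Finset.sum_range_succ, stirling1_eq_zero (show n < n + 1 by omega), risingFact n p]
        simp
      rw [← e2, e1, Nat.mul_add, hs0]
      omega
    calc ∑ j ∈ range (n + 2), stirling1 (n+1) j * (p + 1) ^ j
        = ∑ j ∈ range (n + 1), stirling1 (n+1) (j+1) * (p + 1) ^ (j+1) := by
          rw [Finset.sum_range_succ' (fun j => stirling1 (n+1) j * (p + 1) ^ j) (n+1)]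
          rw [show stirling1 (n+1) 0 = 0 from rfl]
          simp
      _ = (p+1) * (∑ j ∈ range (n + 1), stirling1 n j * (p + 1) ^ j)
          + n * ∑ j ∈ range (n + 1), stirling1 n (j+1) * (p + 1) ^ (j+1) := by
          simp only [stirling1_succ_succ]
          rw [Finset.mul_sum, Finset.mul_sum, ← Finset.sum_add_distrib]
          exact Finset.sum_congr rfl fun j _ => by ring
      _ = (p + 1 + n) * (p + n).descFactorial n := by
          rw [risingFact n p, hshift]; ring
      _ = (p + (n+1)).descFactorial (n + 1) := by
          rw [show p + (n+1) = (p+n) + 1 from rfl, Nat.succ_descFactorial_succ]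
          congr 1
          omega
lemma powEq : ∀ (l p : ℕ),
    (p + 1) ^ l = ∑ j ∈ range (l + 1), stirling2 (l + 1) (j + 1) * p.descFactorial j
  | 0, p => by simp [show stirling2 1 1 = 1 from rfl]
  | l + 1, p => by
    calc (p+1)^(l+1) = (p+1) * ∑ j ∈ range (l + 1), stirling2 (l + 1) (j + 1) * p.descFactorial j := by
          rw [← powEq l p, pow_succ]; ring
      _ = ∑ j ∈ range (l + 1), stirling2 (l + 1) (j + 1) * p.descFactorial (j+1)
          + ∑ j ∈ range (l + 1), (j+1) * stirling2 (l + 1) (j + 1) * p.descFactorial j := by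
          rw [Finset.mul_sum, ← Finset.sum_add_distrib]
          exact Finset.sum_congr rfl fun j _ => by
            calc (p+1) * (stirling2 (l + 1) (j + 1) * p.descFactorial j)
                = stirling2 (l + 1) (j + 1) * ((p+1) * p.descFactorial j) := by ring
              _ = _ := by rw [desc_mul]; ring
      _ = ∑ j ∈ range (l + 2), stirling2 (l + 1) j * p.descFactorial j
          + ∑ j ∈ range (l + 2), (j+1) * stirling2 (l + 1) (j + 1) * p.descFactorial j := by
          congr 1
          · rw [Finset.sum_range_succ' (fun j => stirling2 (l + 1) j * p.descFactorial j) (l+1)]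
            rw [show stirling2 (l+1) 0 = 0 from rfl]
            simp
          · rw [Finset.sum_range_succ (fun j => (j+1) * stirling2 (l + 1) (j + 1) * p.descFactorial j) (l+1),
              stirling2_eq_zero (show l + 1 < l + 2 by omega)]
            simp
      _ = ∑ j ∈ range (l + 2), stirling2 (l + 2) (j + 1) * p.descFactorial j := by
          rw [← Finset.sum_add_distrib]
          exact Finset.sum_congr rfl fun j _ => by
            rw [stirling2_succ_succ (l+1) j]
            ring
def rT (n : ℕ) : ℕ → ℕ → ℕ
  | 0, 0 => 1
  | 0, _ + 1 => 0
  | m + 1, 0 => n * rT n m 0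
  | m + 1, p + 1 => rT n m p + (p + 1 + n) * rT n m (p + 1)
lemma rT_eq_zero (n : ℕ) : ∀ {m p : ℕ}, m < p → rT n m p = 0
  | 0, _ + 1, _ => rfl
  | m + 1, p + 1, h => by
    show rT n m p + (p + 1 + n) * rT n m (p + 1) = 0
    rw [rT_eq_zero n (show m < p by omega), rT_eq_zero n (show m < p + 1 by omega)]
    simp
lemma rT_val (n : ℕ) : ∀ (m p : ℕ),
    rT n m p = ∑ i ∈ range (m + 1), m.choose i * n ^ i * stirling2 (m - i) p
  | 0, p => by
    cases p with
    | zero => simp [rT, show stirling2 0 0 = 1 from rfl]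
    | succ q => simp [rT, show stirling2 0 (q+1) = 0 from rfl]
  | m + 1, p => by
    have split : ∀ i, (m + 1).choose i = m.choose i + if i = 0 then 0 else m.choose (i - 1) := by
      intro i; cases i with
      | zero => simp
      | succ i => simp [Nat.choose_succ_succ, Nat.add_comm]
    have hsum : ∑ i ∈ range (m + 2), (m+1).choose i * n ^ i * stirling2 (m + 1 - i) p
        = (∑ i ∈ range (m + 1), m.choose i * n ^ i * stirling2 ((m - i) + 1) p)
          + n * ∑ i ∈ range (m + 1), m.choose i * n ^ i * stirling2 (m - i) p := by
      calc ∑ i ∈ range (m + 2), (m+1).choose i * n ^ i * stirling2 (m + 1 - i) p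
          = ∑ i ∈ range (m + 2), m.choose i * n ^ i * stirling2 (m + 1 - i) p
            + ∑ i ∈ range (m + 2), (if i = 0 then 0 else m.choose (i-1)) * n ^ i * stirling2 (m + 1 - i) p := by
            rw [← Finset.sum_add_distrib]
            exact Finset.sum_congr rfl fun i _ => by rw [split i]; ring
        _ = _ := by
            congr 1
            · rw [Finset.sum_range_succ
                (fun i => m.choose i * n ^ i * stirling2 (m + 1 - i) p) (m+1),
                Nat.choose_succ_self]
              simp only [Nat.zero_mul, Nat.mul_zero, Nat.add_zero]
              refine Finset.sum_congr rfl fun i hi => ?_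
              have : m + 1 - i = (m - i) + 1 := by
                have := Finset.mem_range.1 hi; omega
              rw [this]
            · rw [Finset.sum_range_succ'
                (fun i => (if i = 0 then 0 else m.choose (i-1)) * n ^ i * stirling2 (m + 1 - i) p) (m+1)]
              simp only [if_neg (Nat.succ_ne_zero _), Nat.add_sub_cancel, if_pos rfl,
                Nat.zero_mul, Nat.add_zero, Finset.mul_sum, zero_mul, add_zero, if_true]
              refine Finset.sum_congr rfl fun i hi => ?_
              have : m + 1 - (i + 1) = m - i := by omega
              rw [this]; ring
    rw [hsum]
    cases p with
    | zero =>
      have h0 : ∀ i, stirling2 ((m - i) + 1) 0 = 0 := fun _ => rfl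
      simp only [h0, Nat.mul_zero, Finset.sum_const_zero, Nat.zero_add]
      rw [← rT_val n m 0]
      rfl
    | succ q =>
      have hq : ∀ i, stirling2 ((m - i) + 1) (q + 1)
          = stirling2 (m - i) q + (q + 1) * stirling2 (m - i) (q + 1) := fun _ => rfl
      simp only [hq]
      have e : ∑ i ∈ range (m + 1), m.choose i * n ^ i *
            (stirling2 (m - i) q + (q + 1) * stirling2 (m - i) (q + 1))
          = (∑ i ∈ range (m + 1), m.choose i * n ^ i * stirling2 (m - i) q)
            + (q+1) * ∑ i ∈ range (m + 1), m.choose i * n ^ i * stirling2 (m - i) (q+1) := by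
        rw [Finset.mul_sum, ← Finset.sum_add_distrib]
        exact Finset.sum_congr rfl fun i _ => by ring
      rw [e, ← rT_val n m q, ← rT_val n m (q+1)]
      show rT n m q + (q + 1 + n) * rT n m (q + 1) = _
      ring
lemma descQ (p j : ℕ) :
    (p.descFactorial (j + 1) : ℚ) = ((p : ℚ) - j) * p.descFactorial j := by
  rcases le_or_gt (j + 1) p with h | h
  · rw [Nat.descFactorial_succ, Nat.cast_mul, Nat.cast_sub (by omega)]
  · rcases le_or_gt p j with h2 | h2
    · rcases eq_or_lt_of_le h2 with rfl | h3
      · rw [Nat.descFactorial_eq_zero_iff_lt.2 (show p < p + 1 by omega)]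
        simp
      · rw [Nat.descFactorial_eq_zero_iff_lt.2 (by omega),
          Nat.descFactorial_eq_zero_iff_lt.2 h3]
        simp
    · omega
lemma bracket (n p j : ℕ) :
    ((p+1).descFactorial j : ℚ) * ((p+1+n).factorial : ℚ)
      - ((p:ℚ) + n) * (p.descFactorial j : ℚ) * ((p+n).factorial : ℚ)
    = ((j:ℚ)+1) * (p.descFactorial j : ℚ) * ((p+n).factorial : ℚ)
      + ((j:ℚ) * ((j:ℚ)+n)) * (p.descFactorial (j-1) : ℚ) * ((p+n).factorial : ℚ) := by
  have hf : ((p+1+n).factorial : ℚ) = ((p:ℚ)+n+1) * ((p+n).factorial : ℚ) := by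
    rw [show p+1+n = (p+n)+1 by omega, Nat.factorial_succ]
    push_cast; ring
  cases j with
  | zero =>
    simp only [Nat.descFactorial_zero, Nat.cast_one, hf]
    push_cast; ring
  | succ j' =>
    rw [Nat.succ_descFactorial_succ, hf, descQ p j', Nat.add_sub_cancel]
    push_cast; ring
noncomputable def Lsum (n m j : ℕ) : ℚ :=
  ∑ p ∈ range (m + 1),
    (-1 : ℚ) ^ (m + p) * (p.descFactorial j : ℚ) * ((p + n).factorial : ℚ) * (rT n m p : ℚ)
lemma rT_succ_cast (n m p : ℕ) :
    (rT n (m + 1) p : ℚ)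
      = (if p = 0 then 0 else (rT n m (p - 1) : ℚ)) + ((p : ℚ) + n) * (rT n m p : ℚ) := by
  cases p with
  | zero =>
    show ((n * rT n m 0 : ℕ) : ℚ) = _
    push_cast
    simp
  | succ q =>
    show ((rT n m q + (q + 1 + n) * rT n m (q + 1) : ℕ) : ℚ) = _
    push_cast
    simp
lemma key (n : ℕ) : ∀ (m j : ℕ),
    Lsum n m j = (j.factorial : ℚ) * ((j + n).factorial : ℚ) * (stirling2 (m + 1) (j + 1) : ℚ)
  | 0, j => by
    cases j with
    | zero =>
      simp [Lsum, rT, show stirling2 1 1 = 1 from rfl]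
    | succ j' =>
      simp [Lsum, rT, Nat.descFactorial_eq_zero_iff_lt.2 (show 0 < j' + 1 by omega),
        stirling2_eq_zero (show 1 < j' + 2 by omega)]
  | m + 1, j => by
    have hsplit : Lsum n (m+1) j
        = (∑ p ∈ range (m + 2), (-1 : ℚ) ^ (m + 1 + p) * (p.descFactorial j : ℚ)
            * ((p + n).factorial : ℚ) * (if p = 0 then 0 else (rT n m (p - 1) : ℚ)))
          + ∑ p ∈ range (m + 2), (-1 : ℚ) ^ (m + 1 + p) * (p.descFactorial j : ℚ)
            * ((p + n).factorial : ℚ) * (((p : ℚ) + n) * (rT n m p : ℚ)) := by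
      rw [Lsum, ← Finset.sum_add_distrib]
      refine Finset.sum_congr rfl fun p _ => ?_
      rw [rT_succ_cast]
      ring
    have hA : (∑ p ∈ range (m + 2), (-1 : ℚ) ^ (m + 1 + p) * (p.descFactorial j : ℚ)
            * ((p + n).factorial : ℚ) * (if p = 0 then 0 else (rT n m (p - 1) : ℚ)))
        = ∑ p ∈ range (m + 1), (-1 : ℚ) ^ (m + p) * ((p+1).descFactorial j : ℚ)
            * ((p + 1 + n).factorial : ℚ) * (rT n m p : ℚ) := by
      rw [Finset.sum_range_succ' (fun p => (-1 : ℚ) ^ (m + 1 + p) * (p.descFactorial j : ℚ)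
            * ((p + n).factorial : ℚ) * (if p = 0 then 0 else (rT n m (p - 1) : ℚ))) (m+1)]
      simp only [Nat.succ_ne_zero, if_false, eq_self_iff_true, if_true, mul_zero, add_zero,
        Nat.add_sub_cancel]
      refine Finset.sum_congr rfl fun p _ => ?_
      have hsign : (-1 : ℚ) ^ (m + 1 + (p + 1)) = (-1 : ℚ) ^ (m + p) := by
        rw [show m + 1 + (p + 1) = (m + p) + 2 by omega, pow_add]
        norm_num
      rw [hsign]
    have hB : (∑ p ∈ range (m + 2), (-1 : ℚ) ^ (m + 1 + p) * (p.descFactorial j : ℚ)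
            * ((p + n).factorial : ℚ) * (((p : ℚ) + n) * (rT n m p : ℚ)))
        = ∑ p ∈ range (m + 1), -((-1 : ℚ) ^ (m + p) * (p.descFactorial j : ℚ)
            * ((p + n).factorial : ℚ) * (((p : ℚ) + n) * (rT n m p : ℚ))) := by
      rw [Finset.sum_range_succ]
      rw [rT_eq_zero n (show m < m + 1 by omega)]
      simp only [Nat.cast_zero, mul_zero, add_zero]
      refine Finset.sum_congr rfl fun p _ => ?_
      have hsign : (-1 : ℚ) ^ (m + 1 + p) = -(-1 : ℚ) ^ (m + p) := by
        rw [show m + 1 + p = (m + p) + 1 by omega, pow_succ]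
        ring
      rw [hsign]
      ring
    have hcomb : Lsum n (m+1) j
        = ((j : ℚ) + 1) * Lsum n m j + ((j : ℚ) * ((j : ℚ) + n)) * Lsum n m (j - 1) := by
      rw [hsplit, hA, hB, ← Finset.sum_add_distrib, Lsum, Lsum, Finset.mul_sum, Finset.mul_sum,
        ← Finset.sum_add_distrib]
      refine Finset.sum_congr rfl fun p _ => ?_
      have hb := bracket n p j
      calc (-1 : ℚ) ^ (m + p) * ((p+1).descFactorial j : ℚ) * ((p + 1 + n).factorial : ℚ)
              * (rT n m p : ℚ)
            + -((-1 : ℚ) ^ (m + p) * (p.descFactorial j : ℚ) * ((p + n).factorial : ℚ)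
              * (((p : ℚ) + n) * (rT n m p : ℚ)))
          = (-1 : ℚ) ^ (m + p) * (rT n m p : ℚ)
            * (((p+1).descFactorial j : ℚ) * ((p+1+n).factorial : ℚ)
              - ((p:ℚ) + n) * (p.descFactorial j : ℚ) * ((p+n).factorial : ℚ)) := by ring
        _ = (-1 : ℚ) ^ (m + p) * (rT n m p : ℚ)
            * (((j:ℚ)+1) * (p.descFactorial j : ℚ) * ((p+n).factorial : ℚ)
              + ((j:ℚ) * ((j:ℚ)+n)) * (p.descFactorial (j-1) : ℚ) * ((p+n).factorial : ℚ)) := by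
            rw [hb]
        _ = _ := by ring
    rw [hcomb, key n m j, key n m (j - 1)]
    cases j with
    | zero =>
      simp only [Nat.cast_zero, zero_mul, zero_add, mul_zero, add_zero, Nat.zero_sub]
      rw [show stirling2 (m + 2) 1 = stirling2 (m+1) 0 + 1 * stirling2 (m+1) 1 from rfl,
        stirling2_zero_right]
      push_cast
      simp
    | succ j' =>
      simp only [Nat.add_sub_cancel]
      rw [show stirling2 (m + 2) (j' + 2)
          = stirling2 (m+1) (j'+1) + (j'+2) * stirling2 (m+1) (j'+2) from rfl,
        Nat.factorial_succ (j'), show (j' + 1 + n) = (j' + n) + 1 by omega,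
        Nat.factorial_succ (j' + n)]
      push_cast
      ring
lemma coeff_expNegQ (b : ℕ) : coeff b expNegQ = (-1) ^ b / b.factorial := by
  rw [expNegQ, coeff_rescale, expQ, coeff_exp]
  simp [div_eq_mul_inv]
lemma coeff_one_sub (b : ℕ) :
    coeff b ((1 : PowerSeries ℚ) - expNegQ) = (if b = 0 then 1 else 0) - (-1) ^ b / b.factorial := by
  rw [map_sub, coeff_one, coeff_expNegQ]
lemma coeffPow : ∀ (p j : ℕ), coeff j (((1 : PowerSeries ℚ) - expNegQ) ^ p)
    = (-1) ^ (j + p) * p.factorial * stirling2 j p / j.factorial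
  | 0, j => by
    rw [pow_zero, coeff_one]
    cases j with
    | zero => norm_num [show stirling2 0 0 = 1 from rfl]
    | succ j' => norm_num [show stirling2 (j'+1) 0 = 0 from rfl]
  | p + 1, j => by
    rw [pow_succ, coeff_mul, Finset.Nat.sum_antidiagonal_eq_sum_range_succ_mk,
      Finset.sum_range_succ]
    have hlast : coeff j (((1 : PowerSeries ℚ) - expNegQ) ^ p) * coeff (j - j) ((1 : PowerSeries ℚ) - expNegQ) = 0 := by
      rw [Nat.sub_self, coeff_one_sub]
      norm_num
    rw [hlast, add_zero]
    have hterm : ∀ a ∈ range j,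
        coeff a (((1 : PowerSeries ℚ) - expNegQ) ^ p) * coeff (j - a) ((1 : PowerSeries ℚ) - expNegQ)
          = (-1) ^ (j + (p + 1)) * p.factorial * ((j.choose a * stirling2 a p : ℕ) : ℚ)
            / j.factorial := by
      intro a ha
      have haj : a < j := Finset.mem_range.1 ha
      rw [coeffPow p a, coeff_one_sub, if_neg (by omega)]
      have hC : ((j.choose a : ℚ)) * a.factorial * (j - a).factorial = j.factorial := by
        exact_mod_cast Nat.choose_mul_factorial_mul_factorial haj.le
      have hs : (-1 : ℚ) ^ (a + p) * (-1) ^ (j - a) = (-1) ^ (j + p) := by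
        rw [← pow_add, show a + p + (j - a) = j + p by omega]
      have hs2 : (-1 : ℚ) ^ (j + (p + 1)) = -((-1) ^ (j + p)) := by
        rw [show j + (p + 1) = (j + p) + 1 by omega, pow_succ]
        ring
      have h1 : (a.factorial : ℚ) ≠ 0 := Nat.cast_ne_zero.2 a.factorial_ne_zero
      have h2 : (((j - a).factorial : ℚ)) ≠ 0 := Nat.cast_ne_zero.2 (j - a).factorial_ne_zero
      have h3 : ((j.factorial : ℚ)) ≠ 0 := Nat.cast_ne_zero.2 j.factorial_ne_zero
      rw [hs2]
      push_cast
      field_simp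
      have hs3 : (-1 : ℚ) ^ a * (-1) ^ (j - a) = (-1) ^ j := by
        rw [← pow_add, show a + (j - a) = j by omega]
      linear_combination ((stirling2 a p : ℚ) * (-1) ^ p * (-1) ^ j) * hC
        - ((stirling2 a p : ℚ) * (-1) ^ p * (j.factorial : ℚ)) * hs3
    rw [Finset.sum_congr rfl hterm, ← Finset.sum_div, ← Finset.mul_sum, ← Nat.cast_sum,
      ← stirling2_SIDcor j p]
    push_cast
    rw [Nat.factorial_succ]
    push_cast
    ring
lemma coeff_liEGF (K a : ℕ) :
    coeff a (liEGF (-(K : ℤ)))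
      = ∑ p ∈ range (a + 1), ((p : ℚ) + 1) ^ K
          * ((-1) ^ (a + p) * (p.factorial : ℚ) * (stirling2 a p : ℚ) / (a.factorial : ℚ)) := by
  rw [liEGF, coeff_mk]
  refine Finset.sum_congr rfl fun p _ => ?_
  rw [coeffPow]
  congr 1
  rw [show -(-(K : ℤ)) = ((K : ℕ) : ℤ) by ring, zpow_natCast]
lemma pbPoly_formula (K : ℕ) (x : ℚ) (m : ℕ) :
    pbPoly (-(K : ℤ)) x m
      = ∑ i ∈ range (m + 1), (m.choose i : ℚ) * (-x) ^ i *
          ∑ p ∈ range (m + 1), ((p : ℚ) + 1) ^ K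
            * ((-1) ^ ((m - i) + p) * (p.factorial : ℚ) * (stirling2 (m - i) p : ℚ)) := by
  rw [pbPoly, pbEGF, coeff_mul, Finset.Nat.sum_antidiagonal_eq_sum_range_succ_mk, Finset.mul_sum]
  refine Finset.sum_congr rfl fun i hi => ?_
  have him : i ≤ m := by have := Finset.mem_range.1 hi; omega
  rw [coeff_rescale, expQ, coeff_exp, coeff_liEGF K (m - i)]
  have hext : ∑ p ∈ range ((m - i) + 1), ((p : ℚ) + 1) ^ K
        * ((-1) ^ ((m - i) + p) * (p.factorial : ℚ) * (stirling2 (m - i) p : ℚ)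
          / ((m - i).factorial : ℚ))
      = ∑ p ∈ range (m + 1), ((p : ℚ) + 1) ^ K
        * ((-1) ^ ((m - i) + p) * (p.factorial : ℚ) * (stirling2 (m - i) p : ℚ)
          / ((m - i).factorial : ℚ)) := by
    refine Finset.sum_subset (Finset.range_subset_range.2 (by omega)) fun p hp hnp => ?_
    have h1 := Finset.mem_range.1 hp
    have h2 : m - i < p := by
      rcases Nat.lt_or_ge p ((m - i) + 1) with h | h
      · exact absurd (Finset.mem_range.2 h) hnp
      · omega
    rw [stirling2_eq_zero h2]
    simp
  have halg0 : (algebraMap ℚ ℚ) (1 / (i.factorial : ℚ)) = 1 / (i.factorial : ℚ) := by simp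
  rw [hext, halg0]
  simp only [Finset.mul_sum]
  refine Finset.sum_congr rfl fun p _ => ?_
  have hfac : (m.choose i : ℚ) * (i.factorial : ℚ) * ((m - i).factorial : ℚ)
      = (m.factorial : ℚ) := by
    exact_mod_cast Nat.choose_mul_factorial_mul_factorial him
  have h1 : (i.factorial : ℚ) ≠ 0 := Nat.cast_ne_zero.2 i.factorial_ne_zero
  have h2 : ((m - i).factorial : ℚ) ≠ 0 := Nat.cast_ne_zero.2 (m - i).factorial_ne_zero
  field_simp
  linear_combination (-(x ^ i * (stirling2 (m - i) p : ℚ) * (-1) ^ i)) * hfac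

theorem scrB_eq_sum_stirling2 (l m n : ℕ) :
    scrB l m n =
      ∑ j ∈ range (min l m + 1),
        (n.factorial : ℚ) * (j.factorial : ℚ) ^ 2 * ((j + n).choose n : ℚ) *
          (stirling2 (l + 1) (j + 1) : ℚ) * (stirling2 (m + 1) (j + 1) : ℚ) := by
  have main : scrB l m n = ∑ j ∈ range (l + 1), (stirling2 (l + 1) (j + 1) : ℚ)
      * ((j.factorial : ℚ) * ((j + n).factorial : ℚ) * (stirling2 (m + 1) (j + 1) : ℚ)) := by
    calc scrB l m n
        = ∑ j' ∈ range (n + 1), (stirling1 n j' : ℚ) * pbPoly (-((l + j' : ℕ) : ℤ)) n m := by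
          rw [scrB]
          refine Finset.sum_congr rfl fun j' _ => ?_
          have : -(l : ℤ) - j' = -((l + j' : ℕ) : ℤ) := by push_cast; ring
          rw [this]
      _ = ∑ j' ∈ range (n + 1), ∑ i ∈ range (m + 1), ∑ p ∈ range (m + 1),
            (stirling1 n j' : ℚ) * ((m.choose i : ℚ) * (-(n : ℚ)) ^ i
              * (((p : ℚ) + 1) ^ (l + j')
                * ((-1) ^ ((m - i) + p) * (p.factorial : ℚ) * (stirling2 (m - i) p : ℚ)))) := by
          refine Finset.sum_congr rfl fun j' _ => ?_
          rw [pbPoly_formula (l + j') (n : ℚ) m]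
          simp only [Finset.mul_sum]
      _ = ∑ i ∈ range (m + 1), ∑ p ∈ range (m + 1),
            (((p + n).descFactorial n : ℚ)) * ((m.choose i : ℚ) * (-(n : ℚ)) ^ i
              * (((p : ℚ) + 1) ^ l
                * ((-1) ^ ((m - i) + p) * (p.factorial : ℚ) * (stirling2 (m - i) p : ℚ)))) := by
          rw [Finset.sum_comm]
          refine Finset.sum_congr rfl fun i _ => ?_
          rw [Finset.sum_comm]
          refine Finset.sum_congr rfl fun p _ => ?_
          have hr : ∑ j' ∈ range (n + 1), (stirling1 n j' : ℚ) * ((p : ℚ) + 1) ^ j'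
              = ((p + n).descFactorial n : ℚ) := by
            exact_mod_cast risingFact n p
          calc ∑ j' ∈ range (n + 1), (stirling1 n j' : ℚ) * ((m.choose i : ℚ) * (-(n : ℚ)) ^ i
                * (((p : ℚ) + 1) ^ (l + j')
                  * ((-1) ^ ((m - i) + p) * (p.factorial : ℚ) * (stirling2 (m - i) p : ℚ))))
              = (∑ j' ∈ range (n + 1), (stirling1 n j' : ℚ) * ((p : ℚ) + 1) ^ j')
                * ((m.choose i : ℚ) * (-(n : ℚ)) ^ i
                  * (((p : ℚ) + 1) ^ l
                    * ((-1) ^ ((m - i) + p) * (p.factorial : ℚ)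
                      * (stirling2 (m - i) p : ℚ)))) := by
                rw [Finset.sum_mul]
                refine Finset.sum_congr rfl fun j' _ => ?_
                rw [pow_add]
                ring
            _ = _ := by rw [hr]
      _ = ∑ p ∈ range (m + 1), (-1 : ℚ) ^ (m + p) * ((p : ℚ) + 1) ^ l
            * ((p + n).factorial : ℚ) * (rT n m p : ℚ) := by
          rw [Finset.sum_comm]
          refine Finset.sum_congr rfl fun p _ => ?_
          have hT : (rT n m p : ℚ)
              = ∑ i ∈ range (m + 1), (m.choose i : ℚ) * (n : ℚ) ^ i
                  * (stirling2 (m - i) p : ℚ) := by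
            exact_mod_cast rT_val n m p
          have hdpf : ((p + n).descFactorial n : ℚ) * (p.factorial : ℚ)
              = ((p + n).factorial : ℚ) := by
            exact_mod_cast desc_mul_factorial n p
          rw [hT, Finset.mul_sum]
          refine Finset.sum_congr rfl fun i hi => ?_
          have him : i ≤ m := by have := Finset.mem_range.1 hi; omega
          have hneg : (-(n : ℚ)) ^ i = (-1 : ℚ) ^ i * (n : ℚ) ^ i := by
            rw [neg_pow]
          have hsg : (-1 : ℚ) ^ i * (-1 : ℚ) ^ ((m - i) + p) = (-1 : ℚ) ^ (m + p) := by
            rw [← pow_add, show i + ((m - i) + p) = m + p by omega]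
          calc ((p + n).descFactorial n : ℚ) * ((m.choose i : ℚ) * (-(n : ℚ)) ^ i
                * (((p : ℚ) + 1) ^ l
                  * ((-1) ^ ((m - i) + p) * (p.factorial : ℚ) * (stirling2 (m - i) p : ℚ))))
              = ((m.choose i : ℚ) * (n : ℚ) ^ i * (stirling2 (m - i) p : ℚ)
                  * ((p : ℚ) + 1) ^ l)
                * ((-1 : ℚ) ^ i * (-1 : ℚ) ^ ((m - i) + p))
                * (((p + n).descFactorial n : ℚ) * (p.factorial : ℚ)) := by
                rw [hneg]; ring
            _ = ((m.choose i : ℚ) * (n : ℚ) ^ i * (stirling2 (m - i) p : ℚ)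
                  * ((p : ℚ) + 1) ^ l)
                * (-1 : ℚ) ^ (m + p) * ((p + n).factorial : ℚ) := by
                rw [hsg, hdpf]
            _ = _ := by ring
      _ = ∑ p ∈ range (m + 1), ∑ j ∈ range (l + 1), (stirling2 (l + 1) (j + 1) : ℚ)
            * ((-1 : ℚ) ^ (m + p) * (p.descFactorial j : ℚ)
              * ((p + n).factorial : ℚ) * (rT n m p : ℚ)) := by
          refine Finset.sum_congr rfl fun p _ => ?_
          have hp : ((p : ℚ) + 1) ^ l = ∑ j ∈ range (l + 1), (stirling2 (l + 1) (j + 1) : ℚ)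
              * (p.descFactorial j : ℚ) := by
            exact_mod_cast powEq l p
          simp only [hp, Finset.mul_sum, Finset.sum_mul]
          refine Finset.sum_congr rfl fun j _ => ?_
          ring
      _ = ∑ j ∈ range (l + 1), (stirling2 (l + 1) (j + 1) : ℚ)
            * ((j.factorial : ℚ) * ((j + n).factorial : ℚ)
              * (stirling2 (m + 1) (j + 1) : ℚ)) := by
          rw [Finset.sum_comm]
          refine Finset.sum_congr rfl fun j _ => ?_
          rw [← Finset.mul_sum, ← key n m j, Lsum]
  rw [main]
  have hsub : range (min l m + 1) ⊆ range (l + 1) := Finset.range_subset_range.2 (by omega)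
  have hv : ∀ j ∈ range (l + 1), j ∉ range (min l m + 1) →
      (stirling2 (l + 1) (j + 1) : ℚ) * ((j.factorial : ℚ) * ((j + n).factorial : ℚ)
        * (stirling2 (m + 1) (j + 1) : ℚ)) = 0 := by
    intro j hj hnj
    have h1 := Finset.mem_range.1 hj
    have h2 : min l m + 1 ≤ j := by
      rcases Nat.lt_or_ge j (min l m + 1) with h | h
      · exact absurd (Finset.mem_range.2 h) hnj
      · omega
    have hm : m + 1 < j + 1 := by omega
    rw [stirling2_eq_zero hm]
    simp
  rw [← Finset.sum_subset hsub hv]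
  refine Finset.sum_congr rfl fun j hj => ?_
  have hjn : ((j + n).choose n : ℚ) * (n.factorial : ℚ) * (j.factorial : ℚ)
      = ((j + n).factorial : ℚ) := by
    have h0 := Nat.choose_mul_factorial_mul_factorial (show n ≤ j + n by omega)
    have h2 : j + n - n = j := by omega
    rw [h2] at h0
    exact_mod_cast h0
  linear_combination (-((j.factorial : ℚ) * (stirling2 (l + 1) (j + 1) : ℚ)
    * (stirling2 (m + 1) (j + 1) : ℚ))) * hjn
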